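/- arXiv:1708.03091 — 5 statements merged into one kernel-verified Lean document; each statement's English description precedes it below -/
import Mathlib

section
/- Let ν > 0 and Φ₊, Φ₋ be real constants, and let c₊, c₋, E : [0,1] → ℝ be differentiable functions satisfying c₊′(x) = E(x)c₊(x) − Φ₊, c₋′(x) = −E(x)c₋(x) − Φ₋ and νE′(x) = c₊(x) − c₋(x) for all x ∈ [0,1]. Then the function x ↦ c₊(x) + c₋(x) − (ν/2)E(x)² + (Φ₊ + Φ₋)x is constant on [0,1]. -/
/-- first integral of the steady electrodiffusion system. -/
theorem electrodiffusion_first_integral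
    (ν Φp Φm : ℝ) (hν : 0 < ν) (cp cm E : ℝ → ℝ)
    (hcp : ∀ x ∈ Set.Icc (0:ℝ) 1, HasDerivAt cp (E x * cp x - Φp) x)
    (hcm : ∀ x ∈ Set.Icc (0:ℝ) 1, HasDerivAt cm (-(E x) * cm x - Φm) x)
    (hE : ∀ x ∈ Set.Icc (0:ℝ) 1, HasDerivAt E ((cp x - cm x) / ν) x) :
    ∀ x ∈ Set.Icc (0:ℝ) 1, ∀ y ∈ Set.Icc (0:ℝ) 1,
      cp x + cm x - ν / 2 * (E x) ^ 2 + (Φp + Φm) * x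
        = cp y + cm y - ν / 2 * (E y) ^ 2 + (Φp + Φm) * y := by
  set F : ℝ → ℝ := fun x => cp x + cm x - ν / 2 * (E x) ^ 2 + (Φp + Φm) * x with hF
  have key : ∀ x ∈ Set.Icc (0:ℝ) 1, HasDerivAt F 0 x := by
    intro x hx
    have h1 := hcp x hx
    have h2 := hcm x hx
    have h3 := hE x hx
    have : HasDerivAt F
        ((E x * cp x - Φp) + (-(E x) * cm x - Φm)
          - ν / 2 * (2 * E x ^ (2-1) * ((cp x - cm x) / ν)) + (Φp + Φm) * 1) x := by
      exact (((h1.add h2).sub ((h3.pow 2).const_mul (ν / 2))).add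
        ((hasDerivAt_id x).const_mul (Φp + Φm)))
    convert this using 1
    field_simp
    ring
  have hcont : ContinuousOn F (Set.Icc 0 1) :=
    fun x hx => ((key x hx).continuousAt).continuousWithinAt
  have hconst : ∀ x ∈ Set.Icc (0:ℝ) 1, F x = F 0 := by
    intro x hx
    exact constant_of_has_deriv_right_zero hcont
      (fun y hy => ((key y (Set.mem_Icc.2 ⟨hy.1, le_of_lt hy.2⟩)).hasDerivWithinAt)) x hx
  intro x hx y hy
  show F x = F y
  rw [hconst x hx, hconst y hy]
end

section
/- Let ν > 0 and Φ₊, Φ₋ be real constants, and let c₊, c₋, E : [0,1] → ℝ be differentiable functions satisfying the dimensionless steady-state electrodiffusion system on [0,1], together with the charge-neutral boundary conditions c₊(0) = c₋(0) = c₀ and c₊(1) = c₋(1) = c₁ for real constants c₀, c₁. Then Φ₊ + Φ₋ = 2(c₀ − c₁) + (ν/2)[E(1)² − E(0)²]. -/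
/-- total flux in terms of boundary field values. -/
theorem electrodiffusion_flux_sum
    (ν Φp Φm c₀ c₁ : ℝ) (hν : 0 < ν) (cp cm E : ℝ → ℝ)
    (hcp : ∀ x ∈ Set.Icc (0:ℝ) 1, HasDerivAt cp (E x * cp x - Φp) x)
    (hcm : ∀ x ∈ Set.Icc (0:ℝ) 1, HasDerivAt cm (-(E x) * cm x - Φm) x)
    (hE : ∀ x ∈ Set.Icc (0:ℝ) 1, HasDerivAt E ((cp x - cm x) / ν) x)
    (hbc0p : cp 0 = c₀) (hbc0m : cm 0 = c₀)
    (hbc1p : cp 1 = c₁) (hbc1m : cm 1 = c₁) :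
    Φp + Φm = 2 * (c₀ - c₁) + ν / 2 * ((E 1) ^ 2 - (E 0) ^ 2) := by
  set g : ℝ → ℝ := fun x => cp x + cm x - ν / 2 * (E x) ^ 2 with hg
  have hν' : ν ≠ 0 := ne_of_gt hν
  have hgd : ∀ x ∈ Set.Icc (0:ℝ) 1, HasDerivAt g (-(Φp + Φm)) x := by
    intro x hx
    have h := ((hcp x hx).add (hcm x hx)).sub
      ((((hE x hx).pow 2)).const_mul (ν / 2))
    refine h.congr_deriv ?_
    field_simp
    ring
  have hcont : ContinuousOn g (Set.Icc 0 1) :=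
    fun x hx => (hgd x hx).continuousAt.continuousWithinAt
  obtain ⟨c, hc, hceq⟩ := exists_hasDerivAt_eq_slope g (fun _ => -(Φp + Φm))
    (by norm_num) hcont
    (fun x hx => hgd x (Set.Ioo_subset_Icc_self hx))
  have : -(Φp + Φm) = g 1 - g 0 := by
    rw [hceq]; ring
  simp only [hg, hbc0p, hbc0m, hbc1p, hbc1m] at this
  linarith
end

section
/- Let ν > 0 and Φ₊, Φ₋ be real constants, and let c₊, c₋, E : [0,1] → ℝ be differentiable functions satisfying the dimensionless steady-state electrodiffusion system on [0,1], together with the charge-neutral boundary conditions c₊(0) = c₋(0) = c₀ and c₊(1) = c₋(1) = c₁. Then for every x ∈ [0,1], c₊(x) = (ν/4)E(x)² + {(c₁ − c₀) + (ν/4)[E(0)² − E(1)²]}x + c₀ − (ν/4)E(0)² + (ν/2)E′(x), and c₋(x) = (ν/4)E(x)² + {(c₁ − c₀) + (ν/4)[E(0)² − E(1)²]}x + c₀ − (ν/4)E(0)² − (ν/2)E′(x). -/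
/-- concentrations expressed in terms of the field and its derivative. -/
theorem electrodiffusion_concentration_formulas
    (ν Φp Φm c₀ c₁ : ℝ) (hν : 0 < ν) (cp cm E E' : ℝ → ℝ)
    (hcp : ∀ x ∈ Set.Icc (0:ℝ) 1, HasDerivAt cp (E x * cp x - Φp) x)
    (hcm : ∀ x ∈ Set.Icc (0:ℝ) 1, HasDerivAt cm (-(E x) * cm x - Φm) x)
    (hE : ∀ x ∈ Set.Icc (0:ℝ) 1, HasDerivAt E (E' x) x)
    (hE' : ∀ x ∈ Set.Icc (0:ℝ) 1, ν * E' x = cp x - cm x)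
    (hbc0p : cp 0 = c₀) (hbc0m : cm 0 = c₀)
    (hbc1p : cp 1 = c₁) (hbc1m : cm 1 = c₁) :
    ∀ x ∈ Set.Icc (0:ℝ) 1,
      cp x = ν / 4 * (E x) ^ 2
          + ((c₁ - c₀) + ν / 4 * ((E 0) ^ 2 - (E 1) ^ 2)) * x
          + c₀ - ν / 4 * (E 0) ^ 2 + ν / 2 * E' x ∧
      cm x = ν / 4 * (E x) ^ 2
          + ((c₁ - c₀) + ν / 4 * ((E 0) ^ 2 - (E 1) ^ 2)) * x
          + c₀ - ν / 4 * (E 0) ^ 2 - ν / 2 * E' x := by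
  set f : ℝ → ℝ := fun x => cp x + cm x - ν / 2 * (E x) ^ 2 + (Φp + Φm) * x with hf
  have hfd : ∀ x ∈ Set.Icc (0:ℝ) 1, HasDerivAt f 0 x := by
    intro x hx
    have h1 := hcp x hx
    have h2 := hcm x hx
    have h3 := ((hE x hx).pow 2).const_mul (ν / 2)
    have h4 := hE' x hx
    have hcomb := ((h1.add h2).sub h3).add ((hasDerivAt_id x).const_mul (Φp + Φm))
    refine hcomb.congr_deriv (Eq.symm ?_)
    push_cast
    linear_combination E x * h4
  have hcont : ContinuousOn f (Set.Icc 0 1) :=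
    fun x hx => ((hfd x hx).continuousAt).continuousWithinAt
  have hconst : ∀ x ∈ Set.Icc (0:ℝ) 1, f x = f 0 :=
    constant_of_has_deriv_right_zero hcont
      (fun x hx => (hfd x (Set.mem_Icc_of_Ico hx)).hasDerivWithinAt)
  intro x hx
  have h0 := hconst x hx
  have h1 := hconst 1 (by norm_num)
  have h4 := hE' x hx
  simp only [hf, hbc0p, hbc0m, hbc1p, hbc1m, mul_zero, mul_one, add_zero] at h0 h1
  constructor
  · linear_combination (h0 - x * h1 - h4) / 2
  · linear_combination (h0 - x * h1 + h4) / 2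
end

section
/- Let ν > 0 and Φ₊, Φ₋ be real constants, let c₊, c₋ : [0,1] → ℝ be differentiable and E : [0,1] → ℝ be twice differentiable, satisfying the dimensionless steady-state electrodiffusion system on [0,1] and the boundary condition c₊(0) = c₋(0) = c₀ at the left face only. Then for every x ∈ [0,1], νE″(x) = (ν/2)E(x)³ + [2c₀ − (ν/2)E(0)² − (Φ₊ + Φ₋)x]E(x) − (Φ₊ − Φ₋). -/
/-- the Painlevé II-type ODE for the field, using only the left
boundary condition. -/
theorem electrodiffusion_painleve_left_bc
    (ν Φp Φm c₀ : ℝ) (hν : 0 < ν) (cp cm E E' E'' : ℝ → ℝ)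
    (hcp : ∀ x ∈ Set.Icc (0:ℝ) 1, HasDerivAt cp (E x * cp x - Φp) x)
    (hcm : ∀ x ∈ Set.Icc (0:ℝ) 1, HasDerivAt cm (-(E x) * cm x - Φm) x)
    (hE : ∀ x ∈ Set.Icc (0:ℝ) 1, HasDerivAt E (E' x) x)
    (hE' : ∀ x ∈ Set.Icc (0:ℝ) 1, ν * E' x = cp x - cm x)
    (hE'' : ∀ x ∈ Set.Icc (0:ℝ) 1, HasDerivAt E' (E'' x) x)
    (hbc0p : cp 0 = c₀) (hbc0m : cm 0 = c₀) :
    ∀ x ∈ Set.Icc (0:ℝ) 1,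
      ν * E'' x = ν / 2 * (E x) ^ 3
        + (2 * c₀ - ν / 2 * (E 0) ^ 2 - (Φp + Φm) * x) * E x
        - (Φp - Φm) := by
  intro x hx
  set s : Set ℝ := Set.Icc (0:ℝ) 1 with hs
  have hus : UniqueDiffOn ℝ s := uniqueDiffOn_Icc one_pos
  -- auxiliary function g, constant on s
  set g : ℝ → ℝ := fun y => cp y + cm y - ν / 2 * (E y) ^ 2 + (Φp + Φm) * y with hg
  have hgderiv : ∀ y ∈ s, HasDerivAt g 0 y := by
    intro y hy
    have h1 := ((hcp y hy).add (hcm y hy)).sub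
      ((((hE y hy).pow 2)).const_mul (ν / 2))
    have h2 := h1.add ((hasDerivAt_id y).const_mul (Φp + Φm))
    refine (h2 : HasDerivAt g _ y).congr_deriv (Eq.symm ?_)
    have h3 := hE' y hy
    norm_num
    linear_combination (E y) * h3
  have hgconst : ∀ y ∈ s, g y = g 0 := by
    apply constant_of_has_deriv_right_zero
    · exact fun y hy => ((hgderiv y hy).continuousAt).continuousWithinAt
    · intro y hy
      exact (hgderiv y (Set.mem_Icc_of_Ico hy)).hasDerivWithinAt
  have hsum : cp x + cm x
      = 2 * c₀ + ν / 2 * (E x) ^ 2 - ν / 2 * (E 0) ^ 2 - (Φp + Φm) * x := by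
    have := hgconst x hx
    simp only [hg, hbc0p, hbc0m] at this
    linarith
  -- ν E'' = E (cp + cm) - (Φp - Φm) via uniqueness of derivWithin
  have hdiff : ν * E'' x = E x * (cp x + cm x) - (Φp - Φm) := by
    have h1 : HasDerivWithinAt (fun y => ν * E' y) (ν * E'' x) s x :=
      ((hE'' x hx).const_mul ν).hasDerivWithinAt
    have h2 : HasDerivWithinAt (fun y => cp y - cm y)
        (E x * (cp x + cm x) - (Φp - Φm)) s x := by
      have h0 := ((hcp x hx).sub (hcm x hx)).hasDerivWithinAt (s := s)
      refine (h0 : HasDerivWithinAt (fun y => cp y - cm y) _ s x).congr_deriv ?_; ring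
    have h1' : HasDerivWithinAt (fun y => cp y - cm y) (ν * E'' x) s x :=
      h1.congr (fun y hy => (hE' y hy).symm) (hE' x hx).symm
    have := h1'.derivWithin (hus x hx)
    rw [h2.derivWithin (hus x hx)] at this
    exact this.symm
  rw [hdiff, hsum]; ring
end

section
/- Let ν > 0, let τ₊, τ₋ > 0 satisfy τ₊ + τ₋ = 1, and let Φ₊, Φ₋, j be real constants with τ₊Φ₊ − τ₋Φ₋ = j. Let c₊, c₋ : [0,1] → ℝ be differentiable and E : [0,1] → ℝ be twice differentiable, satisfying the dimensionless steady-state electrodiffusion system on [0,1] together with the charge-neutral boundary conditions c₊(0) = c₋(0) = c₀ and c₊(1) = c₋(1) = c₁. Then E satisfies the Painlevé II-type equation: for every x ∈ [0,1], νE″(x) = (ν/2)E(x)³ + [2c₀ − (ν/2)E(0)² + {2(c₁ − c₀) + (ν/2)(E(0)² − E(1)²)}x]E(x) + (τ₋ − τ₊){2(c₁ − c₀) + (ν/2)(E(0)² − E(1)²)} − 2j. -/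
/-- the full Painlevé II-type boundary-value ODE for the field. -/
theorem electrodiffusion_painleve_full
    (ν Φp Φm c₀ c₁ τp τm j : ℝ) (hν : 0 < ν)
    (hτp : 0 < τp) (hτm : 0 < τm) (hτ : τp + τm = 1)
    (hj : τp * Φp - τm * Φm = j)
    (cp cm E E' E'' : ℝ → ℝ)
    (hcp : ∀ x ∈ Set.Icc (0:ℝ) 1, HasDerivAt cp (E x * cp x - Φp) x)
    (hcm : ∀ x ∈ Set.Icc (0:ℝ) 1, HasDerivAt cm (-(E x) * cm x - Φm) x)
    (hE : ∀ x ∈ Set.Icc (0:ℝ) 1, HasDerivAt E (E' x) x)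
    (hE' : ∀ x ∈ Set.Icc (0:ℝ) 1, ν * E' x = cp x - cm x)
    (hE'' : ∀ x ∈ Set.Icc (0:ℝ) 1, HasDerivAt E' (E'' x) x)
    (hbc0p : cp 0 = c₀) (hbc0m : cm 0 = c₀)
    (hbc1p : cp 1 = c₁) (hbc1m : cm 1 = c₁) :
    ∀ x ∈ Set.Icc (0:ℝ) 1,
      ν * E'' x = ν / 2 * (E x) ^ 3
        + (2 * c₀ - ν / 2 * (E 0) ^ 2
            + (2 * (c₁ - c₀) + ν / 2 * ((E 0) ^ 2 - (E 1) ^ 2)) * x) * E x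
        + (τm - τp) * (2 * (c₁ - c₀) + ν / 2 * ((E 0) ^ 2 - (E 1) ^ 2))
        - 2 * j := by
  -- G x := cp x + cm x - ν/2 * (E x)^2 + (Φp + Φm) * x  is constant on [0,1]
  set G : ℝ → ℝ := fun x => cp x + cm x - ν / 2 * (E x) ^ 2 + (Φp + Φm) * x with hG
  have hGderiv : ∀ x ∈ Set.Icc (0:ℝ) 1, HasDerivAt G 0 x := by
    intro x hx
    have h1 := ((hcp x hx).add (hcm x hx)).sub
      (((hE x hx).pow 2).const_mul (ν / 2))
    have h2 := h1.add ((hasDerivAt_id x).const_mul (Φp + Φm))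
    have hkey : ν * E' x = cp x - cm x := hE' x hx
    convert h2 using 1
    · rfl
    · rfl
    · rfl
    norm_num
    linear_combination E x * hkey
  have hGcont : ContinuousOn G (Set.Icc 0 1) := fun x hx =>
    (hGderiv x hx).continuousAt.continuousWithinAt
  have hGconst : ∀ x ∈ Set.Icc (0:ℝ) 1, G x = G 0 := by
    refine constant_of_has_deriv_right_zero hGcont fun x hx => ?_
    exact (hGderiv x (Set.mem_Icc_of_Ico hx)).hasDerivWithinAt
  have h0 : (0:ℝ) ∈ Set.Icc (0:ℝ) 1 := by norm_num
  have h1 : (1:ℝ) ∈ Set.Icc (0:ℝ) 1 := by norm_num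
  have hG1 : G 1 = G 0 := hGconst 1 h1
  -- determines Φp + Φm
  have hsum : Φp + Φm = 2 * (c₀ - c₁) + ν / 2 * ((E 1) ^ 2 - (E 0) ^ 2) := by
    simp only [hG, hbc0p, hbc0m, hbc1p, hbc1m, mul_one, mul_zero] at hG1
    linarith
  intro x hx
  -- ν E'' x = E x * (cp x + cm x) - (Φp - Φm)
  have hdiff : HasDerivAt (fun y => cp y - cm y)
      ((E x * cp x - Φp) - (-(E x) * cm x - Φm)) x := (hcp x hx).sub (hcm x hx)
  have hνE : HasDerivAt (fun y => ν * E' y) (ν * E'' x) x := (hE'' x hx).const_mul ν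
  have hud : UniqueDiffWithinAt ℝ (Set.Icc (0:ℝ) 1) x :=
    (uniqueDiffOn_Icc (by norm_num)) x hx
  have hcongr : HasDerivWithinAt (fun y => cp y - cm y) (ν * E'' x) (Set.Icc 0 1) x := by
    refine hνE.hasDerivWithinAt.congr (fun y hy => (hE' y hy).symm) (hE' x hx).symm
  have heq : ν * E'' x = (E x * cp x - Φp) - (-(E x) * cm x - Φm) :=
    hud.eq_deriv _ hcongr hdiff.hasDerivWithinAt
  -- value of cp x + cm x from constancy of G
  have hS : cp x + cm x = ν / 2 * (E x) ^ 2 + 2 * c₀ - ν / 2 * (E 0) ^ 2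
      - (Φp + Φm) * x := by
    have := hGconst x hx
    simp only [hG, hbc0p, hbc0m, mul_zero] at this
    linarith
  -- Φp - Φm from flux condition
  have hd : Φp - Φm = 2 * j - (τp - τm) * (Φp + Φm) := by linear_combination 2 * hj + (Φm - Φp) * hτ
  rw [heq]
  have : (E x * cp x - Φp) - (-(E x) * cm x - Φm)
      = E x * (cp x + cm x) - (Φp - Φm) := by ring
  rw [this, hS, hd, hsum]
  ring
end
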